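/- For all n, m ≥ 1, the following are equivalent: (1) every finite system of non-commutative polynomial equations over ℕ (in any number of variables) that is solvable in M_n(ℕ) is also solvable in M_m(ℕ); (2) n divides m. -/

import Mathlib

open Matrix

/-- The variable indexed by `(i,j)`. -/
noncomputable def matA (n : ℕ) (i j : Fin n) : FreeAlgebra ℕ (Fin (n * n)) :=
  FreeAlgebra.ι ℕ (finProdFinEquiv (i, j))

/-- Left-hand sides of the matrix-units system. -/
noncomputable def Psys (n : ℕ) : Fin (n * n * (n * n) + 1) → FreeAlgebra ℕ (Fin (n * n)) :=
  Fin.lastCases (∑ i, matA n i i)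
    (fun a =>
      matA n (finProdFinEquiv.symm (finProdFinEquiv.symm a).1).1
             (finProdFinEquiv.symm (finProdFinEquiv.symm a).1).2 *
      matA n (finProdFinEquiv.symm (finProdFinEquiv.symm a).2).1
             (finProdFinEquiv.symm (finProdFinEquiv.symm a).2).2)

/-- Right-hand sides of the matrix-units system. -/
noncomputable def Qsys (n : ℕ) : Fin (n * n * (n * n) + 1) → FreeAlgebra ℕ (Fin (n * n)) :=
  Fin.lastCases 1
    (fun a =>
      if (finProdFinEquiv.symm (finProdFinEquiv.symm a).1).2
          = (finProdFinEquiv.symm (finProdFinEquiv.symm a).2).1 then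
        matA n (finProdFinEquiv.symm (finProdFinEquiv.symm a).1).1
               (finProdFinEquiv.symm (finProdFinEquiv.symm a).2).2
      else 0)

/-- For `n, m ≥ 1`: every finite system of non-commutative polynomial equations over `ℕ`
solvable in `M_n(ℕ)` is also solvable in `M_m(ℕ)` if and only if `n ∣ m`. -/
theorem stmt4 (n m : ℕ) (hn : 1 ≤ n) (hm : 1 ≤ m) :
    (∀ (k s : ℕ) (P Q : Fin s → FreeAlgebra ℕ (Fin k)),
      (∃ X : Fin k → Matrix (Fin n) (Fin n) ℕ,
        ∀ j : Fin s, FreeAlgebra.lift ℕ X (P j) = FreeAlgebra.lift ℕ X (Q j)) →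
      (∃ Y : Fin k → Matrix (Fin m) (Fin m) ℕ,
        ∀ j : Fin s, FreeAlgebra.lift ℕ Y (P j) = FreeAlgebra.lift ℕ Y (Q j)))
    ↔ n ∣ m := by
  constructor
  · intro h
    have stdmul : ∀ i j k l : Fin n,
        Matrix.single i j (1 : ℕ) * Matrix.single k l 1
          = if j = k then Matrix.single i l 1 else 0 := by
      intro i j k l
      split_ifs with hc
      · subst hc; simp
      · simp [hc]
    -- Apply the hypothesis to the matrix-units system.
    obtain ⟨Y, hY⟩ := h (n * n) (n * n * (n * n) + 1) (Psys n) (Qsys n) ⟨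
      fun v => Matrix.single (finProdFinEquiv.symm v).1 (finProdFinEquiv.symm v).2 (1 : ℕ), by
      have hA : ∀ i j : Fin n,
          FreeAlgebra.lift ℕ
            (fun v => Matrix.single (finProdFinEquiv.symm v).1 (finProdFinEquiv.symm v).2 (1 : ℕ))
            (matA n i j) = Matrix.single i j (1 : ℕ) := by
        intro i j
        simp only [matA, FreeAlgebra.lift_ι_apply, Equiv.symm_apply_apply]
      intro j
      refine Fin.lastCases ?_ ?_ j
      · simp only [Psys, Qsys, Fin.lastCases_last, map_sum, _root_.map_one, hA]
        ext a b
        simp only [Matrix.sum_apply, Matrix.single, Matrix.of_apply, Matrix.one_apply]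
        by_cases hab : a = b
        · subst hab; simp
        · simp [hab, fun x => show ¬(x = a ∧ x = b) from fun ⟨h1, h2⟩ => hab (h1 ▸ h2 ▸ rfl)]
      · intro a
        simp only [Psys, Qsys, Fin.lastCases_castSucc, _root_.map_mul, hA, apply_ite,
          _root_.map_zero, stdmul]
        split_ifs with hc <;> simp [hc]⟩
    -- extract the matrix units in `M_m(ℕ)`
    set B : Fin n → Fin n → Matrix (Fin m) (Fin m) ℕ :=
      fun i j => Y (finProdFinEquiv (i, j)) with hB
    have hBA : ∀ i j : Fin n, FreeAlgebra.lift ℕ Y (matA n i j) = B i j := by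
      intro i j; simp only [matA, FreeAlgebra.lift_ι_apply, hB]
    have hmul : ∀ i j k l : Fin n, B i j * B k l = if j = k then B i l else 0 := by
      intro i j k l
      have := hY (Fin.castSucc (finProdFinEquiv (finProdFinEquiv (i, j), finProdFinEquiv (k, l))))
      simpa only [Psys, Qsys, Fin.lastCases_castSucc, Equiv.symm_apply_apply, _root_.map_mul,
        hBA, apply_ite, _root_.map_zero] using this
    have hsum : ∑ i, B i i = 1 := by
      have := hY (Fin.last _)
      simpa only [Psys, Qsys, Fin.lastCases_last, map_sum, _root_.map_one, hBA] using this
    have : NeZero n := ⟨by omega⟩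
    -- each diagonal idempotent has the same trace
    have htr : ∀ i : Fin n, (B i i).trace = (B 0 0).trace := by
      intro i
      have h1 : B i 0 * B 0 i = B i i := by simpa using hmul i 0 0 i
      have h2 : B 0 i * B i 0 = B 0 0 := by simpa using hmul 0 i i 0
      calc (B i i).trace = (B i 0 * B 0 i).trace := by rw [h1]
        _ = (B 0 i * B i 0).trace := Matrix.trace_mul_comm _ _
        _ = (B 0 0).trace := by rw [h2]
    refine ⟨(B 0 0).trace, ?_⟩
    have : (∑ i, B i i).trace = (1 : Matrix (Fin m) (Fin m) ℕ).trace := by rw [hsum]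
    rw [Matrix.trace_sum, Matrix.trace_one] at this
    simp only [htr] at this
    simpa [Finset.sum_const, Finset.card_univ] using this.symm
  · rintro ⟨d, rfl⟩ k s P Q ⟨X, hX⟩
    -- block-diagonal embedding `M_n(ℕ) →+* M_{nd}(ℕ)`
    let f : Matrix (Fin n) (Fin n) ℕ →+* Matrix (Fin (n * d)) (Fin (n * d)) ℕ :=
      ((Matrix.reindexAlgEquiv ℕ ℕ
          (finProdFinEquiv : Fin n × Fin d ≃ Fin (n * d))).toAlgHom.toRingHom).comp
        ((Matrix.blockDiagonalRingHom (Fin n) (Fin d) ℕ).comp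
          (Pi.constRingHom (Fin d) (Matrix (Fin n) (Fin n) ℕ)))
    refine ⟨fun v => f (X v), ?_⟩
    have key : ∀ p : FreeAlgebra ℕ (Fin k),
        FreeAlgebra.lift ℕ (fun v => f (X v)) p = f (FreeAlgebra.lift ℕ X p) := by
      intro p
      have : FreeAlgebra.lift ℕ (fun v => f (X v))
          = (f.toNatAlgHom.comp (FreeAlgebra.lift ℕ X)) := by
        apply FreeAlgebra.hom_ext
        funext v
        simp only [Function.comp_apply, FreeAlgebra.lift_ι_apply]
        exact (congrArg f (FreeAlgebra.lift_ι_apply X v)).symm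
      rw [this]
      rfl
    intro j
    rw [key, key, hX j]
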